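/- For an integer m ≥ 2 and the indicial polynomial ψ(λ) := λ(λ+1)⋯(λ+m−2) − m!, one has ψ″(2) = m!·[(H_m − 1)² − (H_m^{(2)} − 1)], where H_m = ∑_{j=1}^m 1/j and H_m^{(2)} = ∑_{j=1}^m 1/j². -/

import Mathlib

open Polynomial Finset

lemma eval_deriv1 (s : Finset ℕ) (x : ℝ) (hx : ∀ k ∈ s, x + (k:ℝ) ≠ 0) :
    (Polynomial.derivative (∏ k ∈ s, (X + C (k:ℝ)))).eval x
      = (∏ k ∈ s, (x + (k:ℝ))) * ∑ k ∈ s, 1/(x + (k:ℝ)) := by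
  induction s using Finset.induction_on with
  | empty => simp
  | insert _ _ ha ih =>
    rename_i a s
    rw [Finset.prod_insert ha, derivative_mul, Finset.prod_insert ha,
      Finset.sum_insert ha]
    have ha0 : x + (a:ℝ) ≠ 0 := hx a (mem_insert_self _ _)
    have ih' := ih (fun k hk => hx k (mem_insert_of_mem hk))
    simp only [derivative_add, derivative_X, derivative_C, add_zero, one_mul,
      eval_add, eval_mul, eval_X, eval_C, eval_prod, ih']
    field_simp

lemma eval_deriv2 (s : Finset ℕ) (x : ℝ) (hx : ∀ k ∈ s, x + (k:ℝ) ≠ 0) :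
    (Polynomial.derivative (Polynomial.derivative (∏ k ∈ s, (X + C (k:ℝ))))).eval x
      = (∏ k ∈ s, (x + (k:ℝ))) *
        ((∑ k ∈ s, 1/(x + (k:ℝ)))^2 - ∑ k ∈ s, 1/(x + (k:ℝ))^2) := by
  induction s using Finset.induction_on with
  | empty => simp
  | insert _ _ ha ih =>
    rename_i a s
    rw [Finset.prod_insert ha, derivative_mul, derivative_add, Finset.prod_insert ha,
      Finset.sum_insert ha, Finset.sum_insert ha]
    have ha0 : x + (a:ℝ) ≠ 0 := hx a (mem_insert_self _ _)
    have hx' : ∀ k ∈ s, x + (k:ℝ) ≠ 0 := fun k hk => hx k (mem_insert_of_mem hk)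
    have ih' := ih hx'
    have h1 := eval_deriv1 s x hx'
    simp only [derivative_X, derivative_C, add_zero, one_mul, derivative_mul, derivative_add,
      derivative_one, zero_mul, zero_add, eval_add, eval_mul, eval_X, eval_C, eval_prod,
      ih', h1]
    field_simp
    ring

lemma prod_shift (n : ℕ) : ∏ k ∈ Finset.range n, (k + 2) = (n + 1).factorial := by
  induction n with
  | zero => simp
  | succ n ih =>
    rw [Finset.prod_range_succ, ih]
    rw [show n + 1 + 1 = n + 2 from rfl, Nat.factorial_succ (n+1)]
    ring

theorem stmt_6 (m : ℕ) (hm : 2 ≤ m) :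
    deriv (deriv (fun lam : ℝ => (∏ k ∈ Finset.range (m-1), (lam + k)) - m.factorial)) 2
      = m.factorial * (((∑ j ∈ Finset.Icc 1 m, (1:ℝ)/j) - 1)^2
          - ((∑ j ∈ Finset.Icc 1 m, (1:ℝ)/j^2) - 1)) := by
  set p : Polynomial ℝ := ∏ k ∈ Finset.range (m-1), (X + C (k:ℝ)) with hp
  have hfun : (fun lam : ℝ => (∏ k ∈ Finset.range (m-1), (lam + k)) - m.factorial)
      = fun lam : ℝ => (p - C (m.factorial : ℝ)).eval lam := by
    funext lam
    simp [hp, eval_prod]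
  rw [hfun]
  have hd1 : deriv (fun lam : ℝ => (p - C (m.factorial : ℝ)).eval lam)
      = fun lam : ℝ => (Polynomial.derivative p).eval lam := by
    funext y
    rw [Polynomial.deriv]
    simp
  rw [hd1, Polynomial.deriv]
  have hx : ∀ k ∈ Finset.range (m-1), (2:ℝ) + (k:ℝ) ≠ 0 := by
    intro k _; positivity
  rw [eval_deriv2 _ _ hx]
  -- product value
  have hprod : (∏ k ∈ Finset.range (m-1), ((2:ℝ) + (k:ℝ))) = (m.factorial : ℝ) := by
    have := prod_shift (m - 1)
    rw [Nat.sub_add_cancel (le_trans (by norm_num) hm)] at this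
    calc (∏ k ∈ Finset.range (m-1), ((2:ℝ) + (k:ℝ)))
        = ((∏ k ∈ Finset.range (m-1), (k + 2) : ℕ) : ℝ) := by
          push_cast; rw [Finset.prod_congr rfl]; intro k _; ring
      _ = (m.factorial : ℝ) := by rw [this]
  -- sum shifts
  have hsum1 : (∑ j ∈ Finset.Icc 1 m, (1:ℝ)/j) - 1
      = ∑ k ∈ Finset.range (m-1), 1/((2:ℝ) + (k:ℝ)) := by
    have h1 : Finset.Icc 1 m = insert 1 (Finset.Icc 2 m) := by
      exact (Finset.insert_Icc_add_one_left_eq_Icc (le_trans one_le_two hm)).symm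
    rw [h1, Finset.sum_insert (by simp), ← Finset.Ico_add_one_right_eq_Icc,
      Finset.sum_Ico_eq_sum_range, show m + 1 - 2 = m - 1 by omega]
    norm_num
  have hsum2 : (∑ j ∈ Finset.Icc 1 m, (1:ℝ)/j^2) - 1
      = ∑ k ∈ Finset.range (m-1), 1/((2:ℝ) + (k:ℝ))^2 := by
    have h1 : Finset.Icc 1 m = insert 1 (Finset.Icc 2 m) := by
      exact (Finset.insert_Icc_add_one_left_eq_Icc (le_trans one_le_two hm)).symm
    rw [h1, Finset.sum_insert (by simp), ← Finset.Ico_add_one_right_eq_Icc,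
      Finset.sum_Ico_eq_sum_range, show m + 1 - 2 = m - 1 by omega]
    norm_num
  rw [hprod, hsum1, hsum2]
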